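/- Let X ⊆ ℕ be a set with uniqueness of sums, and let p be an X-adequate ultrafilter on ℕ. Then every element u of the family 𝓕^p generates a free subsemigroup: for all n, m ≥ 1, u^n = u^m implies n = m. -/

import Mathlib

open Filter

attribute [local instance] Ultrafilter.add Ultrafilter.addSemigroup

/-- `sumPow u n` is the `n`-fold sum `u + ⋯ + u` of the ultrafilter `u`, for `n ≥ 1`
(with junk value `u` at `n = 0`). -/
def sumPow (u : Ultrafilter ℕ) : ℕ → Ultrafilter ℕ
  | 0 => u
  | 1 => u
  | n + 2 => sumPow u (n + 1) + u

/-- `FS A` is the set of all sums of nonempty finite subsets of `A`. -/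
def FS (A : Set ℕ) : Set ℕ :=
  {s | ∃ F : Finset ℕ, F.Nonempty ∧ ↑F ⊆ A ∧ s = ∑ i ∈ F, i}

/-- `A` has uniqueness of sums: two nonempty finite subsets of `A` with the same sum are equal. -/
def UniquenessOfSums (A : Set ℕ) : Prop :=
  ∀ F G : Finset ℕ, ↑F ⊆ A → ↑G ⊆ A → F.Nonempty → G.Nonempty →
    (∑ i ∈ F, i) = ∑ i ∈ G, i → F = G

/-- `A` is `X`-adequate: `A ⊆ FS X` and for every subsequence of the increasing enumeration
of `X` there is a unique `m` such that the sum of the first `m + 1` terms lies in `A`. -/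
def IsAdequateSet (X A : Set ℕ) : Prop :=
  A ⊆ FS X ∧ ∀ g : ℕ → ℕ, StrictMono g →
    ∃! m : ℕ, (∑ k ∈ Finset.range (m + 1), Nat.nth (· ∈ X) (g k)) ∈ A

/-- An ultrafilter `u` is `X`-adequate: some `X`-adequate set belongs to `u`, and `FS Y ∈ u`
for every cofinite subset `Y` of `X`. -/
def IsAdequateUltrafilter (X : Set ℕ) (u : Ultrafilter ℕ) : Prop :=
  (∃ A ∈ u, IsAdequateSet X A) ∧
    ∀ Y : Set ℕ, Y ⊆ X → (X \ Y).Finite → FS Y ∈ u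

/-- The Blass–Frolík sum `Σ_u u_n`, an ultrafilter on `ℕ × ℕ`:
`A ∈ BFsum u v ↔ {n | {m | (n, m) ∈ A} ∈ v n} ∈ u`. -/
def BFsum (u : Ultrafilter ℕ) (v : ℕ → Ultrafilter ℕ) : Ultrafilter (ℕ × ℕ) :=
  u.bind fun n => (v n).map fun m => (n, m)

/-- The indexed sum `⊕_u u_n`: the image of `BFsum u v` under `(n, m) ↦ n + m`. -/
def indexedSum (u : Ultrafilter ℕ) (v : ℕ → Ultrafilter ℕ) : Ultrafilter ℕ :=
  (BFsum u v).map fun q => q.1 + q.2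

/-- `InF p` is the smallest family of ultrafilters on `ℕ` containing `p` and closed under
indexed sums `⊕`. -/
inductive InF (p : Ultrafilter ℕ) : Ultrafilter ℕ → Prop
  | base : InF p p
  | isum (u : Ultrafilter ℕ) (v : ℕ → Ultrafilter ℕ) :
      InF p u → (∀ n, InF p (v n)) → InF p (indexedSum u v)

namespace S8

def wordSet (X : Set ℕ) (T : Set (List ℕ)) : Set ℕ :=
  {a | ∃ F : Finset ℕ, ↑F ⊆ X ∧ F.Nonempty ∧ a = ∑ i ∈ F, i ∧ F.sort (· ≤ ·) ∈ T}

def Tpow (T : Set (List ℕ)) : ℕ → Set (List ℕ)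
  | 0 => T
  | 1 => T
  | n + 2 => {l | ∃ s ∈ Tpow T (n + 1), ∃ r ∈ T, l = s ++ r}

def Antichain (T : Set (List ℕ)) : Prop :=
  (∀ l ∈ T, l ≠ []) ∧ ∀ l ∈ T, ∀ l' ∈ T, l <+: l' → l = l'

lemma le_sum {F : Finset ℕ} {e : ℕ} (h : e ∈ F) : e ≤ ∑ i ∈ F, i :=
  Finset.single_le_sum (f := fun i => i) (fun i _ => Nat.zero_le i) h

lemma sort_union {F G : Finset ℕ} (h : ∀ x ∈ F, ∀ y ∈ G, x < y) :
    (F ∪ G).sort (· ≤ ·) = F.sort (· ≤ ·) ++ G.sort (· ≤ ·) := by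
  have hdisj : Disjoint F G :=
    Finset.disjoint_left.2 fun a haF haG => lt_irrefl a (h a haF a haG)
  refine List.Perm.eq_of_pairwise' (Finset.pairwise_sort _ _) ?_ ?_
  swap
  · rw [← Multiset.coe_eq_coe]
    push_cast [Finset.sort_eq]
    rw [← Finset.disjUnion_eq_union F G hdisj]
    simp only [Finset.disjUnion, Finset.sort_eq]
    rw [← Multiset.coe_add]
    simp [Finset.sort_eq]
  · rw [List.pairwise_append]
    exact ⟨Finset.pairwise_sort _ _, Finset.pairwise_sort _ _,
      fun a ha b hb => (h a ((Finset.mem_sort _).1 ha) b ((Finset.mem_sort _).1 hb)).le⟩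

lemma sort_inj {F G : Finset ℕ} (h : F.sort (· ≤ ·) = G.sort (· ≤ ·)) : F = G := by
  have := congrArg List.toFinset h
  rwa [Finset.sort_toFinset, Finset.sort_toFinset] at this


lemma mem_add {U V : Ultrafilter ℕ} {S : Set ℕ} :
    S ∈ U + V ↔ {t | {s | t + s ∈ S} ∈ V} ∈ U := by
  have h := Ultrafilter.eventually_add U V (· ∈ S)
  simp only [Filter.eventually_iff, Ultrafilter.mem_coe, Set.setOf_mem_eq] at h
  exact h

lemma mem_ubind {α β : Type} {f : Ultrafilter α} {m : α → Ultrafilter β} {s : Set β} :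
    s ∈ f.bind m ↔ {x | s ∈ m x} ∈ f := by
  have h : (↑(f.bind m) : Filter β) = Filter.bind ↑f (fun x => ↑(m x) : α → Filter β) := rfl
  rw [← Ultrafilter.mem_coe, h, Filter.mem_bind']
  rfl

lemma mem_indexedSum {u : Ultrafilter ℕ} {v : ℕ → Ultrafilter ℕ} {S : Set ℕ} :
    S ∈ indexedSum u v ↔ {n | {m | n + m ∈ S} ∈ v n} ∈ u := by
  rw [indexedSum, Ultrafilter.mem_map, BFsum, mem_ubind]
  simp [Ultrafilter.mem_map, Set.preimage]

lemma usuper {U : Ultrafilter ℕ} {s t : Set ℕ} (h : s ∈ U) (hsub : s ⊆ t) : t ∈ U :=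
  Filter.mem_of_superset h hsub

lemma uinter {U : Ultrafilter ℕ} {s t : Set ℕ} (hs : s ∈ U) (ht : t ∈ U) : s ∩ t ∈ U :=
  Filter.inter_mem hs ht

lemma prefix_total {l₁ l₂ l₃ : List ℕ} (h1 : l₁ <+: l₃) (h2 : l₂ <+: l₃) :
    l₁ <+: l₂ ∨ l₂ <+: l₁ := by
  rcases le_total l₁.length l₂.length with h | h
  · left
    rw [List.prefix_iff_eq_take.mp h1, List.prefix_iff_eq_take.mp h2]
    exact List.take_isPrefix_take.2 (Or.inl h)
  · right
    rw [List.prefix_iff_eq_take.mp h1, List.prefix_iff_eq_take.mp h2]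
    exact List.take_isPrefix_take.2 (Or.inl h)

lemma prefix_cancel {s r r' : List ℕ} (h : s ++ r <+: s ++ r') : r <+: r' := by
  obtain ⟨k, hk⟩ := h
  rw [List.append_assoc] at hk
  exact ⟨k, List.append_cancel_left hk⟩

lemma tpow_ne_nil {T : Set (List ℕ)} (hT : Antichain T) :
    ∀ n, ∀ l ∈ Tpow T n, l ≠ [] := by
  intro n
  match n with
  | 0 => exact hT.1
  | 1 => exact hT.1
  | n + 2 =>
    rintro l ⟨s, _, r, hr, rfl⟩ hnil
    exact hT.1 r hr (List.append_eq_nil_iff.1 hnil).2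

lemma tpow_peel {T : Set (List ℕ)} :
    ∀ n, ∀ l ∈ Tpow T (n + 1), ∃ s r, s ∈ T ∧ l = s ++ r ∧
      ((r = [] ∧ n = 0) ∨ ∃ k, n = k + 1 ∧ r ∈ Tpow T (k + 1)) := by
  intro n
  induction n with
  | zero => exact fun l hl => ⟨l, [], hl, (List.append_nil l).symm, Or.inl ⟨rfl, rfl⟩⟩
  | succ n ih =>
    rintro l ⟨s', hs', a, ha, rfl⟩
    obtain ⟨s, r', hs, rfl, hcase⟩ := ih s' hs'
    rcases hcase with ⟨rfl, rfl⟩ | ⟨k, rfl, hr'⟩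
    · exact ⟨s, a, hs, by simp, Or.inr ⟨0, rfl, ha⟩⟩
    · exact ⟨s, r' ++ a, hs, List.append_assoc s r' a,
        Or.inr ⟨k + 1, rfl, ⟨r', hr', a, ha, rfl⟩⟩⟩

lemma tpow_unique_aux {T : Set (List ℕ)} (hT : Antichain T) :
    ∀ L : ℕ, ∀ l : List ℕ, l.length ≤ L → ∀ n m,
      l ∈ Tpow T (n + 1) → l ∈ Tpow T (m + 1) → n = m := by
  intro L
  induction L with
  | zero =>
    intro l hl n m h1 _
    exact absurd (List.eq_nil_of_length_eq_zero (Nat.le_zero.1 hl))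
      (tpow_ne_nil hT (n + 1) l h1)
  | succ L ih =>
    intro l hl n m h1 h2
    obtain ⟨s, r, hs, rfl, hc1⟩ := tpow_peel n _ h1
    obtain ⟨s', r', hs', heq, hc2⟩ := tpow_peel m _ h2
    have hss' : s = s' := by
      have p1 : s <+: s ++ r := List.prefix_append _ _
      have p2 : s' <+: s ++ r := heq ▸ List.prefix_append s' r'
      rcases prefix_total p1 p2 with h | h
      · exact hT.2 s hs s' hs' h
      · exact (hT.2 s' hs' s hs h).symm
    subst hss'
    have hrr' : r = r' := List.append_cancel_left heq
    subst hrr'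
    have hslen : 1 ≤ s.length := by
      rcases s with _ | _
      · exact absurd rfl (hT.1 [] hs)
      · simp
    rcases hc1 with ⟨rfl, rfl⟩ | ⟨k, rfl, hr1⟩
    · rcases hc2 with ⟨_, rfl⟩ | ⟨k', rfl, hr2⟩
      · rfl
      · exact absurd rfl (tpow_ne_nil hT (k' + 1) [] hr2)
    · rcases hc2 with ⟨rfl, rfl⟩ | ⟨k', rfl, hr2⟩
      · exact absurd rfl (tpow_ne_nil hT (k + 1) [] hr1)
      · have hrlen : r.length ≤ L := by
          have := hl
          rw [List.length_append] at this
          omega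
        rw [ih r hrlen k k' hr1 hr2]

lemma tpow_unique {T : Set (List ℕ)} (hT : Antichain T) {l : List ℕ} {n m : ℕ}
    (hn : 1 ≤ n) (hm : 1 ≤ m) (h1 : l ∈ Tpow T n) (h2 : l ∈ Tpow T m) : n = m := by
  obtain ⟨n', rfl⟩ : ∃ n', n = n' + 1 := ⟨n - 1, by omega⟩
  obtain ⟨m', rfl⟩ : ∃ m', m = m' + 1 := ⟨m - 1, by omega⟩
  rw [tpow_unique_aux hT l.length l le_rfl n' m' h1 h2]

lemma sum_sort (G : Finset ℕ) : (G.sort (· ≤ ·)).sum = ∑ i ∈ G, i := by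
  have h : ((G.sort (· ≤ ·) : List ℕ) : Multiset ℕ) = G.val := Finset.sort_eq _ _
  have h2 : ∑ i ∈ G, i = (G.val.map id).sum := rfl
  rw [h2, Multiset.map_id, ← h, Multiset.sum_coe]

lemma sum_range_take (l : List ℕ) :
    ∀ s, s ≤ l.length → (∑ k ∈ Finset.range s, l.getD k 0) = (l.take s).sum := by
  intro s
  induction s with
  | zero => simp
  | succ s ih =>
    intro hs
    rw [Finset.sum_range_succ, ih (by omega), List.sum_take_succ _ s (by omega),
      List.getD_eq_getElem _ _ (by omega)]

lemma prefix_eq_of_adequate {X A : Set ℕ} (hA : IsAdequateSet X A)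
    {F G : Finset ℕ} (hF : ↑F ⊆ X) (hG : ↑G ⊆ X) (hFne : F.Nonempty) (hGne : G.Nonempty)
    (hFA : (∑ i ∈ F, i) ∈ A) (hGA : (∑ i ∈ G, i) ∈ A)
    (hpre : F.sort (· ≤ ·) <+: G.sort (· ≤ ·)) : F = G := by
  classical
  set l : List ℕ := G.sort (· ≤ ·) with hl
  have hlen : l.length = G.card := Finset.length_sort _
  have htpos : 0 < l.length := by rw [hlen]; exact Finset.card_pos.2 hGne
  set t := l.length with ht
  have hmeml : ∀ k, k < t → l.getD k 0 ∈ X := by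
    intro k hk
    rw [List.getD_eq_getElem _ _ hk]
    exact hG ((Finset.mem_sort (α := ℕ) (· ≤ ·)).1 (List.getElem_mem hk))
  set c : ℕ → ℕ := fun x => Nat.count (· ∈ X) x with hc
  set g : ℕ → ℕ := fun k => if k < t then c (l.getD k 0) else c (l.getD (t - 1) 0) + (k + 1 - t)
    with hg
  have hsorted : List.Pairwise (· < ·) l := (Finset.sortedLT_sort G).pairwise
  have hentry : ∀ a b, a < b → b < t → l.getD a 0 < l.getD b 0 := by
    intro a b hab hb
    rw [List.getD_eq_getElem _ _ (lt_trans hab hb), List.getD_eq_getElem _ _ hb]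
    exact List.pairwise_iff_get.1 hsorted ⟨a, lt_trans hab hb⟩ ⟨b, hb⟩ hab
  have hgmono : StrictMono g := by
    intro a b hab
    simp only [hg]
    rcases lt_or_ge b t with hbt | hbt
    · rw [if_pos (lt_trans hab hbt), if_pos hbt]
      exact Nat.count_strict_mono (hmeml a (lt_trans hab hbt)) (hentry a b hab hbt)
    · rcases lt_or_ge a t with hat | hat
      · rw [if_pos hat, if_neg (by omega)]
        have h1 : l.getD a 0 ≤ l.getD (t - 1) 0 := by
          rcases eq_or_lt_of_le (show a ≤ t - 1 by omega) with h | h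
          · rw [h]
          · exact (hentry a (t - 1) h (by omega)).le
        have h2 : c (l.getD a 0) ≤ c (l.getD (t - 1) 0) := Nat.count_monotone _ h1
        omega
      · rw [if_neg (by omega), if_neg (by omega)]
        omega
  have hnth : ∀ k, k < t → Nat.nth (· ∈ X) (g k) = l.getD k 0 := by
    intro k hk
    simp only [hg, if_pos hk, hc]
    exact Nat.nth_count (hmeml k hk)
  have hsum : ∀ s, s ≤ t → (∑ k ∈ Finset.range s, Nat.nth (· ∈ X) (g k)) = (l.take s).sum := by
    intro s hs
    rw [← sum_range_take l s hs]
    exact Finset.sum_congr rfl fun k hk => hnth k (lt_of_lt_of_le (Finset.mem_range.1 hk) hs)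
  have hFcard : 0 < F.card := Finset.card_pos.2 hFne
  have hFlen : (F.sort (· ≤ ·)).length = F.card := Finset.length_sort _
  have hcard_le : F.card ≤ t := by
    rw [← hFlen]
    exact hpre.length_le
  have htake : l.take F.card = F.sort (· ≤ ·) := by
    have := List.prefix_iff_eq_take.mp hpre
    rw [hFlen] at this
    exact this.symm
  obtain ⟨m₀, _, huniq⟩ := hA.2 g hgmono
  have e₁ : (∑ k ∈ Finset.range (F.card - 1 + 1), Nat.nth (· ∈ X) (g k)) ∈ A := by
    rw [show F.card - 1 + 1 = F.card by omega, hsum F.card hcard_le, htake, sum_sort]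
    exact hFA
  have e₂ : (∑ k ∈ Finset.range (t - 1 + 1), Nat.nth (· ∈ X) (g k)) ∈ A := by
    rw [show t - 1 + 1 = t by omega, hsum t le_rfl, List.take_length, hl, sum_sort]
    exact hGA
  have hcards : F.card = t := by
    have := (huniq _ e₁).trans (huniq _ e₂).symm
    omega
  apply sort_inj
  rw [← htake, hcards, ← hl, List.take_length]

lemma combine {X : Set ℕ} (hX : UniquenessOfSums X) {F : Finset ℕ} (hF : ↑F ⊆ X)
    (hFne : F.Nonempty) {T₂ T' : Set (List ℕ)}
    (hT' : ∀ G : Finset ℕ, ↑G ⊆ X → G.Nonempty → (∀ x ∈ F, ∀ y ∈ G, x < y) →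
      G.sort (· ≤ ·) ∈ T₂ → (F ∪ G).sort (· ≤ ·) ∈ T') :
    ∀ s, s ∈ wordSet X T₂ → s ∈ FS {x | x ∈ X ∧ (∑ i ∈ F, i) < x} →
      (∑ i ∈ F, i) + s ∈ wordSet X T' := by
  intro s hs hsep
  obtain ⟨G, hGX, hGne, rfl, hGT⟩ := hs
  obtain ⟨G', hG'ne, hG'sub, hsum⟩ := hsep
  have hG'X : ↑G' ⊆ X := fun x hx => (hG'sub hx).1
  have hGG' : G = G' := hX G G' hGX hG'X hGne hG'ne hsum
  subst hGG'
  have hgt : ∀ x ∈ F, ∀ y ∈ G, x < y := fun x hxF y hyG =>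
    lt_of_le_of_lt (le_sum hxF) (hG'sub hyG).2
  have hdisj : Disjoint F G :=
    Finset.disjoint_left.2 fun a haF haG => lt_irrefl a (hgt a haF a haG)
  exact ⟨F ∪ G, by push_cast; exact Set.union_subset hF hGX,
    hFne.mono Finset.subset_union_left, (Finset.sum_union hdisj).symm,
    hT' G hGX hGne hgt hGT⟩

lemma FS_add_subset {X : Set ℕ} {k n : ℕ} (hn : n ∈ FS {x | x ∈ X ∧ k < x}) :
    ∀ m ∈ FS {x | x ∈ X ∧ k + n < x}, n + m ∈ FS {x | x ∈ X ∧ k < x} := by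
  obtain ⟨F, hFne, hFsub, rfl⟩ := hn
  rintro m ⟨G, hGne, hGsub, rfl⟩
  have hgt : ∀ x ∈ F, ∀ y ∈ G, x < y := fun x hxF y hyG =>
    lt_of_le_of_lt (le_trans (le_sum hxF) (Nat.le_add_left _ k)) (hGsub hyG).2
  have hdisj : Disjoint F G :=
    Finset.disjoint_left.2 fun a haF haG => lt_irrefl a (hgt a haF a haG)
  refine ⟨F ∪ G, hFne.mono Finset.subset_union_left, ?_, (Finset.sum_union hdisj).symm⟩
  push_cast
  refine Set.union_subset hFsub fun y hy => ?_
  obtain ⟨h1, h2⟩ := hGsub hy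
  exact ⟨h1, by omega⟩

def SepFS (X : Set ℕ) (u : Ultrafilter ℕ) : Prop :=
  ∀ k : ℕ, FS {x | x ∈ X ∧ k < x} ∈ u

lemma good_of_inF {X : Set ℕ} (hX : UniquenessOfSums X) {p : Ultrafilter ℕ}
    (hp : IsAdequateUltrafilter X p) :
    ∀ u : Ultrafilter ℕ, InF p u →
      SepFS X u ∧ ∃ T : Set (List ℕ), Antichain T ∧ wordSet X T ∈ u := by
  intro u hu
  induction hu with
  | base =>
    constructor
    · intro k
      refine hp.2 _ (fun x hx => hx.1) (Set.Finite.subset (Set.finite_Iic k) ?_)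
      rintro x ⟨hx1, hx2⟩
      simp only [Set.mem_setOf_eq, not_and, Set.mem_Iic] at hx2 ⊢
      by_contra h
      exact absurd (hx2 hx1) (by omega)
    · obtain ⟨A, hAp, hAad⟩ := hp.1
      refine ⟨{l | ∃ F : Finset ℕ, ↑F ⊆ X ∧ F.Nonempty ∧ (∑ i ∈ F, i) ∈ A ∧
        l = F.sort (· ≤ ·)}, ⟨?_, ?_⟩, ?_⟩
      · rintro l ⟨F, _, hFne, _, rfl⟩
        apply List.ne_nil_of_length_pos
        rw [Finset.length_sort]
        exact Finset.card_pos.2 hFne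
      · rintro l ⟨F, hFX, hFne, hFA, rfl⟩ l' ⟨F', hF'X, hF'ne, hF'A, rfl⟩ hpre
        rw [prefix_eq_of_adequate hAad hFX hF'X hFne hF'ne hFA hF'A hpre]
      · refine usuper hAp fun a ha => ?_
        obtain ⟨F, hFne, hFX, rfl⟩ := hAad.1 ha
        exact ⟨F, hFX, hFne, rfl, ⟨F, hFX, hFne, ha, rfl⟩⟩
  | isum u v hu hv ihu ihv =>
    obtain ⟨husep, T, hT, hTu⟩ := ihu
    choose Tv hTv hTvu using fun n => (ihv n).2
    have hvsep : ∀ n, SepFS X (v n) := fun n => (ihv n).1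
    constructor
    · intro k
      rw [mem_indexedSum]
      refine usuper (husep k) fun n hn => ?_
      exact usuper (hvsep n (k + n)) fun m hm => FS_add_subset hn m hm
    · refine ⟨{l | ∃ F : Finset ℕ, ∃ r : List ℕ, ↑F ⊆ X ∧ F.Nonempty ∧
        F.sort (· ≤ ·) ∈ T ∧ r ∈ Tv (∑ i ∈ F, i) ∧ l = F.sort (· ≤ ·) ++ r},
        ⟨?_, ?_⟩, ?_⟩
      · rintro l ⟨F, r, _, hFne, _, _, rfl⟩ hnil
        have : F.sort (· ≤ ·) = [] := (List.append_eq_nil_iff.1 hnil).1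
        have h2 := Finset.card_pos.2 hFne
        rw [← Finset.length_sort (· ≤ ·), this] at h2
        simp at h2
      · rintro l ⟨F, r, hFX, hFne, hFT, hr, rfl⟩ l' ⟨F', r', hF'X, hF'ne, hF'T, hr', rfl⟩ hpre
        have p1 : F.sort (· ≤ ·) <+: F'.sort (· ≤ ·) ++ r' :=
          (List.prefix_append _ _).trans hpre
        have p2 : F'.sort (· ≤ ·) <+: F'.sort (· ≤ ·) ++ r' := List.prefix_append _ _
        have hss : F.sort (· ≤ ·) = F'.sort (· ≤ ·) := by
          rcases prefix_total p1 p2 with h | h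
          · exact hT.2 _ hFT _ hF'T h
          · exact (hT.2 _ hF'T _ hFT h).symm
        have hFF' : F = F' := sort_inj hss
        subst hFF'
        rw [← hss] at hpre
        rw [(hTv (∑ i ∈ F, i)).2 r hr r' hr' (prefix_cancel hpre)]
      · rw [mem_indexedSum]
        refine usuper hTu fun n hn => ?_
        obtain ⟨F, hFX, hFne, rfl, hFT⟩ := hn
        refine usuper (uinter (hTvu (∑ i ∈ F, i)) (hvsep (∑ i ∈ F, i) (∑ i ∈ F, i)))
          fun m hm => ?_
        refine combine hX hFX hFne (T₂ := Tv (∑ i ∈ F, i)) ?_ m hm.1 ?_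
        · intro G hGX hGne hgt hGT
          exact ⟨F, G.sort (· ≤ ·), hFX, hFne, hFT, hGT, sort_union hgt⟩
        · exact hm.2

lemma sumPow_mem {X : Set ℕ} (hX : UniquenessOfSums X) {u : Ultrafilter ℕ}
    (husep : SepFS X u) {T : Set (List ℕ)} (hTu : wordSet X T ∈ u) :
    ∀ n, wordSet X (Tpow T n) ∈ sumPow u n := by
  intro n
  induction n with
  | zero => exact hTu
  | succ n ih =>
    rcases n with _ | k
    · exact hTu
    · rw [show sumPow u (k + 2) = sumPow u (k + 1) + u from rfl, mem_add]
      refine usuper ih fun t ht => ?_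
      obtain ⟨F, hFX, hFne, rfl, hFT⟩ := ht
      refine usuper (uinter hTu (husep (∑ i ∈ F, i))) fun s hs => ?_
      refine combine hX hFX hFne (T₂ := T) ?_ s hs.1 hs.2
      intro G hGX hGne hgt hGT
      exact ⟨F.sort (· ≤ ·), hFT, G.sort (· ≤ ·), hGT, sort_union hgt⟩

theorem statement8' (X : Set ℕ) (hX : UniquenessOfSums X)
    (p : Ultrafilter ℕ) (hp : IsAdequateUltrafilter X p) :
    ∀ u : Ultrafilter ℕ, InF p u →
      ∀ n m : ℕ, 1 ≤ n → 1 ≤ m → sumPow u n = sumPow u m → n = m := by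
  intro u hu n m hn hm heq
  obtain ⟨husep, T, hT, hTu⟩ := good_of_inF hX hp u hu
  have h1 := sumPow_mem hX husep hTu n
  have h2 := sumPow_mem hX husep hTu m
  rw [heq] at h1
  have h3 := uinter h1 h2
  obtain ⟨a, ha1, ha2⟩ := Filter.nonempty_of_mem h3
  obtain ⟨F, hFX, hFne, rfl, hF1⟩ := ha1
  obtain ⟨F', hF'X, hF'ne, hsum, hF'2⟩ := ha2
  have hFF' : F = F' := hX F F' hFX hF'X hFne hF'ne hsum
  subst hFF'
  exact tpow_unique hT hn hm hF1 hF'2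

end S8

/-- If `X` has uniqueness of sums and `p` is an `X`-adequate ultrafilter, then every element `u`
of `𝓕^p` generates a free subsemigroup: `u^n = u^m → n = m` for `n, m ≥ 1`. -/
theorem statement8 (X : Set ℕ) (hX : UniquenessOfSums X)
    (p : Ultrafilter ℕ) (hp : IsAdequateUltrafilter X p) :
    ∀ u : Ultrafilter ℕ, InF p u →
      ∀ n m : ℕ, 1 ≤ n → 1 ≤ m → sumPow u n = sumPow u m → n = m := by
  exact S8.statement8' X hX p hp
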